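/- Let λ ∈ ℂ with 0 < arg λ < π/2 and let w ∈ ℂ satisfy 0 ≤ arg w ≤ π (i.e. Im w ≥ 0) and 0 ≤ arg(λw) ≤ π (i.e. Im(λw) ≥ 0). Then |arg(e^{-i(π-arg λ)/2} w)| ≤ (π - arg λ)/2. -/

import Mathlib

/-- If `0 < arg λ < π/2`, `Im w ≥ 0` and `Im (λ w) ≥ 0`, then
`|arg (e^{-i(π - arg λ)/2} w)| ≤ (π - arg λ)/2`. -/
theorem stmt_11 (l w : ℂ) (h1 : 0 < l.arg) (h2 : l.arg < Real.pi / 2)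
    (hw : 0 ≤ w.im) (hlw : 0 ≤ (l * w).im) :
    |(Complex.exp (-Complex.I * (((Real.pi - l.arg) / 2 : ℝ) : ℂ)) * w).arg| ≤
      (Real.pi - l.arg) / 2 := by
  have hπ := Real.pi_pos
  set θ := l.arg with hθ
  set φ := (Real.pi - θ) / 2 with hφ
  have hφpos : 0 < φ := by rw [hφ]; linarith
  have hφlt : φ < Real.pi / 2 := by rw [hφ]; linarith
  rcases eq_or_ne w 0 with rfl | hw0
  · simp [Complex.arg_zero]; linarith
  have hl0 : l ≠ 0 := by
    intro h; rw [hθ, h, Complex.arg_zero] at h1; exact lt_irrefl 0 h1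
  have ha0 : 0 ≤ w.arg := Complex.arg_nonneg_iff.2 hw
  have haπ : w.arg ≤ Real.pi := Complex.arg_le_pi w
  -- Key: arg w ≤ π - θ
  have key : w.arg ≤ Real.pi - θ := by
    by_contra h
    push_neg at h
    have him : (l * w).im = ‖l‖ * ‖w‖ * Real.sin (θ + w.arg) := by
      have hca := norm_ne_zero_iff.mpr hl0
      have hcw := norm_ne_zero_iff.mpr hw0
      rw [Complex.mul_im, Real.sin_add, hθ, Complex.cos_arg hl0, Complex.sin_arg,
        Complex.cos_arg hw0, Complex.sin_arg]
      field_simp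
      ring
    have hx1 : 0 < θ + w.arg - Real.pi := by linarith
    have hx2 : θ + w.arg - Real.pi < Real.pi := by linarith
    have hsin : Real.sin (θ + w.arg) < 0 := by
      have := Real.sin_pos_of_pos_of_lt_pi hx1 hx2
      have hrw : Real.sin (θ + w.arg - Real.pi + Real.pi) = -Real.sin (θ + w.arg - Real.pi) :=
        Real.sin_add_pi _
      rw [show θ + w.arg - Real.pi + Real.pi = θ + w.arg by ring] at hrw
      linarith
    have habs : 0 < ‖l‖ * ‖w‖ :=
      mul_pos (norm_pos_iff.mpr hl0) (norm_pos_iff.mpr hw0)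
    nlinarith [hlw, him]
  -- arg of the exponential factor
  have he : Complex.exp (-Complex.I * (φ : ℂ)) = Complex.exp (((-φ : ℝ) : ℂ) * Complex.I) := by
    push_cast; ring_nf
  have harge : (Complex.exp (-Complex.I * (φ : ℂ))).arg = -φ := by
    rw [he, Complex.exp_mul_I,
      Complex.arg_cos_add_sin_mul_I (θ := -φ) ⟨by linarith, by linarith⟩]
  have hmul : (Complex.exp (-Complex.I * (φ : ℂ)) * w).arg = -φ + w.arg := by
    rw [← harge]
    exact Complex.arg_mul (Complex.exp_ne_zero _) hw0
      (by rw [harge]; constructor <;> [linarith; linarith])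
  rw [hmul, harge] at *
  rw [abs_le]
  constructor <;> [linarith; linarith]
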